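/- For every row vector v = (a₁, …, a_{n+2m−1}) ∈ R^{n+2m−1}, the Vaserstein-type matrix L(v) lies in E_{n+2m}(R), i.e. L(v) is a product of elementary matrices. -/

import Mathlib

open Matrix BigOperators

namespace OddUnitary

/-- A pseudoinvolution on a commutative ring `R`: `sigma` is the additive map `r ↦ r̄`
satisfying `σ(r₁r₂) = σ(r₂)·σ(1)⁻¹·σ(r₁)` and `σ(σ(r)) = r`; the field `i` is the
inverse `1̄⁻¹` of the unit `1̄ = sigma 1`. -/
structure PseudoInv (R : Type*) [CommRing R] where
  sigma : R →+ R
  i : R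
  bar_one_mul_i : sigma 1 * i = 1
  i_mul_bar_one : i * sigma 1 = 1
  bar_mul : ∀ r s : R, sigma (r * s) = sigma s * i * sigma r
  bar_bar : ∀ r : R, sigma (sigma r) = r

variable {R : Type*} [CommRing R]

/-- Entry `(i, j)` of the matrix `ψ̃_{s/2} ⊥ φ`: hyperbolic blocks
`ψ̃₁ = [[0, 1], [-1̄, 0]]` occupying the first `s` (an even number) indices,
followed by the `n × n` form matrix `φ`. -/
def psiEnt (P : PseudoInv R) {n : ℕ} (φ : Matrix (Fin n) (Fin n) R) (s i j : ℕ) : R :=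
  if i < s ∧ j < s then
    (if j = i + 1 ∧ i % 2 = 0 then 1
     else if i = j + 1 ∧ j % 2 = 0 then -(P.sigma 1) else 0)
  else if h : s ≤ i ∧ i < s + n ∧ s ≤ j ∧ j < s + n then
    φ ⟨i - s, by omega⟩ ⟨j - s, by omega⟩
  else 0

/-- Entry `(i, j)` of the matrix `ψ̃′_{s/2} ⊥ (1̄⁻¹)²·φ`, where
`ψ̃′₁ = [[0, -1̄⁻¹], [1, 0]]`. -/
def psi'Ent (P : PseudoInv R) {n : ℕ} (φ : Matrix (Fin n) (Fin n) R) (s i j : ℕ) : R :=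
  if i < s ∧ j < s then
    (if j = i + 1 ∧ i % 2 = 0 then -P.i
     else if i = j + 1 ∧ j % 2 = 0 then 1 else 0)
  else if h : s ≤ i ∧ i < s + n ∧ s ≤ j ∧ j < s + n then
    P.i * P.i * φ ⟨i - s, by omega⟩ ⟨j - s, by omega⟩
  else 0

/-- The form matrix `Ψ = ψ̃ₘ ⊥ φ` of Petrov's odd hyperbolic unitary group. -/
def PsiM (P : PseudoInv R) {n : ℕ} (φ : Matrix (Fin n) (Fin n) R) (m : ℕ) :
    Matrix (Fin (n + 2*m)) (Fin (n + 2*m)) R :=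
  fun i j => psiEnt P φ (2*m) i j

/-- The row vector `c = (1, 0, …, 0) ∈ R^{n+2m-1}`. -/
def crow (R : Type*) [CommRing R] (n m : ℕ) : Fin (n + 2*m - 1) → R :=
  fun j => if (j : ℕ) = 0 then 1 else 0

/-- The row vector `d = (-1̄⁻¹, 0, …, 0) ∈ R^{n+2m-1}`. -/
def drow (P : PseudoInv R) (n m : ℕ) : Fin (n + 2*m - 1) → R :=
  fun j => if (j : ℕ) = 0 then -P.i else 0

/-- `μ`, the lower-right `(n+2m-1) × (n+2m-1)` block of `Ψ`. -/
def muM (P : PseudoInv R) {n : ℕ} (φ : Matrix (Fin n) (Fin n) R) (m : ℕ) :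
    Matrix (Fin (n + 2*m - 1)) (Fin (n + 2*m - 1)) R :=
  fun i j => psiEnt P φ (2*m) ((i : ℕ) + 1) ((j : ℕ) + 1)

/-- `ρ`, the lower-right `(n+2m-1) × (n+2m-1)` block of `Ψ⁻¹`. -/
noncomputable def rhoM (P : PseudoInv R) {n : ℕ} (φ : Matrix (Fin n) (Fin n) R) (m : ℕ) :
    Matrix (Fin (n + 2*m - 1)) (Fin (n + 2*m - 1)) R :=
  fun i j => (PsiM P φ m)⁻¹ ⟨(i : ℕ) + 1, by omega⟩ ⟨(j : ℕ) + 1, by omega⟩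

/-- `α = I_{n+2m-1} + dᵗ·v̄·μ`. -/
def alphaM (P : PseudoInv R) {n : ℕ} (φ : Matrix (Fin n) (Fin n) R) (m : ℕ)
    (v : Fin (n + 2*m - 1) → R) : Matrix (Fin (n + 2*m - 1)) (Fin (n + 2*m - 1)) R :=
  1 + vecMulVec (drow P n m) (fun k => P.sigma (v k)) * muM P φ m

/-- `β = I_{n+2m-1} - 1̄⁻¹·ρ·v̄ᵗ·c`. -/
noncomputable def betaM (P : PseudoInv R) {n : ℕ} (φ : Matrix (Fin n) (Fin n) R) (m : ℕ)
    (v : Fin (n + 2*m - 1) → R) : Matrix (Fin (n + 2*m - 1)) (Fin (n + 2*m - 1)) R :=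
  1 - P.i • vecMulVec (rhoM P φ m *ᵥ fun k => P.sigma (v k)) (crow R n m)

/-- The Vaserstein-type matrix `L(v) = [[1, 0], [vᵗ, α]]` (block form). -/
def Lmat (P : PseudoInv R) {n : ℕ} (φ : Matrix (Fin n) (Fin n) R) (m : ℕ)
    (v : Fin (n + 2*m - 1) → R) : Matrix (Fin (n + 2*m)) (Fin (n + 2*m)) R :=
  fun i j =>
    if hi : (i : ℕ) = 0 then (if (j : ℕ) = 0 then 1 else 0)
    else if hj : (j : ℕ) = 0 then v ⟨(i : ℕ) - 1, by omega⟩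
    else alphaM P φ m v ⟨(i : ℕ) - 1, by omega⟩ ⟨(j : ℕ) - 1, by omega⟩

/-- The Vaserstein-type matrix `L(v)* = [[1, v], [0, β]]` (block form). -/
noncomputable def Lstar (P : PseudoInv R) {n : ℕ} (φ : Matrix (Fin n) (Fin n) R) (m : ℕ)
    (v : Fin (n + 2*m - 1) → R) : Matrix (Fin (n + 2*m)) (Fin (n + 2*m)) R :=
  fun i j =>
    if hi : (i : ℕ) = 0 then (if hj : (j : ℕ) = 0 then 1 else v ⟨(j : ℕ) - 1, by omega⟩)
    else if hj : (j : ℕ) = 0 then 0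
    else betaM P φ m v ⟨(i : ℕ) - 1, by omega⟩ ⟨(j : ℕ) - 1, by omega⟩

/-- `q(a₂, …, a_{n+2m-1}) = 1̄⁻¹·(ā₂, …, ā_{n+2m-1})·(ψ̃_{m-1} ⊥ φ)·(a₂, …, a_{n+2m-1})ᵗ`. -/
def qform (P : PseudoInv R) {n : ℕ} (φ : Matrix (Fin n) (Fin n) R) (m : ℕ)
    (v : Fin (n + 2*m - 1) → R) : R :=
  P.i * ∑ i : Fin (n + 2*m - 2), ∑ j : Fin (n + 2*m - 2),
    P.sigma (v ⟨(i : ℕ) + 1, by omega⟩) * psiEnt P φ (2*m - 2) i j * v ⟨(j : ℕ) + 1, by omega⟩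

/-- Condition (D) on `v = (a₁, …, a_{n+2m-1})`:
`ā₁ - a₁ = 1̄⁻¹·(ā₂, …)·(ψ̃_{m-1} ⊥ φ)·(a₂, …)ᵗ = q(a₂, …, a_{n+2m-1})`. -/
def condD (P : PseudoInv R) {n : ℕ} (φ : Matrix (Fin n) (Fin n) R) (m : ℕ)
    (hn : 1 ≤ n) (hm : 2 ≤ m) (v : Fin (n + 2*m - 1) → R) : Prop :=
  P.sigma (v ⟨0, by omega⟩) - v ⟨0, by omega⟩ = qform P φ m v

/-- Condition (E) on `v = (a₁, …, a_{n+2m-1})`: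
`σ(1̄·a₁) - 1̄·a₁ = (ā₂, …)·(ψ̃′_{m-1} ⊥ (1̄⁻¹)²·φ)ᵗ·(a₂, …)ᵗ`. -/
def condE (P : PseudoInv R) {n : ℕ} (φ : Matrix (Fin n) (Fin n) R) (m : ℕ)
    (hn : 1 ≤ n) (hm : 2 ≤ m) (v : Fin (n + 2*m - 1) → R) : Prop :=
  P.sigma (P.sigma 1 * v ⟨0, by omega⟩) - P.sigma 1 * v ⟨0, by omega⟩ =
    ∑ i : Fin (n + 2*m - 2), ∑ j : Fin (n + 2*m - 2),
      P.sigma (v ⟨(i : ℕ) + 1, by omega⟩) * psi'Ent P φ (2*m - 2) j i * v ⟨(j : ℕ) + 1, by omega⟩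

/-- The form `B(x, y) = (x mapped entrywise by σ)ᵗ·1̄⁻¹·Ψ·y` on column vectors. -/
def Bform (P : PseudoInv R) {n : ℕ} (φ : Matrix (Fin n) (Fin n) R) (m : ℕ)
    (x y : Fin (n + 2*m) → R) : R :=
  ∑ i, ∑ j, P.sigma (x i) * P.i * PsiM P φ m i j * y j

/-- Entry function of the Gram matrix `G = φ ⊥ ψ̃ₘ` (form matrix `φ` first), in the
ordered basis `(v₁, …, vₙ, e₁, e₋₁, e₂, e₋₂, …, eₘ, e₋ₘ)`. -/
def gEnt (P : PseudoInv R) {n : ℕ} (φ : Matrix (Fin n) (Fin n) R) (i j : ℕ) : R :=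
  if h : i < n ∧ j < n then φ ⟨i, by omega⟩ ⟨j, by omega⟩
  else if n ≤ i ∧ n ≤ j then
    (if j = i + 1 ∧ (i - n) % 2 = 0 then 1
     else if i = j + 1 ∧ (j - n) % 2 = 0 then -(P.sigma 1) else 0)
  else 0

/-- The Gram matrix `G = φ ⊥ ψ̃ₘ`. -/
def GM (P : PseudoInv R) {n : ℕ} (φ : Matrix (Fin n) (Fin n) R) (m : ℕ) :
    Matrix (Fin (n + 2*m)) (Fin (n + 2*m)) R :=
  fun i j => gEnt P φ i j

/-- The sesquilinear form `⟨x, y⟩ = Σ_{i,j} σ(xᵢ)·1̄⁻¹·G_{ij}·yⱼ` on `V = R^{n+2m}`. -/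
def formV (P : PseudoInv R) {n : ℕ} (φ : Matrix (Fin n) (Fin n) R) (m : ℕ)
    (x y : Fin (n + 2*m) → R) : R :=
  ∑ i, ∑ j, P.sigma (x i) * P.i * GM P φ m i j * y j

/-- The Eichler–Siegel–Dickson transvection
`T_{x,y}(r)(w) = w + x·1̄⁻¹·(⟨y, w⟩ + r·⟨x, w⟩) + y·⟨x, w⟩`. -/
def ESD (P : PseudoInv R) {n : ℕ} (φ : Matrix (Fin n) (Fin n) R) (m : ℕ)
    (x y : Fin (n + 2*m) → R) (r : R) (w : Fin (n + 2*m) → R) : Fin (n + 2*m) → R :=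
  w + (P.i * (formV P φ m y w + r * formV P φ m x w)) • x + formV P φ m x w • y

/-- The basis vector `e₁` (position `n` in the ordered basis). -/
def e1vec (R : Type*) [CommRing R] (n m : ℕ) : Fin (n + 2*m) → R :=
  fun l => if (l : ℕ) = n then 1 else 0

/-- The basis vector `e₋₁` (position `n+1` in the ordered basis). -/
def eneg1vec (R : Type*) [CommRing R] (n m : ℕ) : Fin (n + 2*m) → R :=
  fun l => if (l : ℕ) = n + 1 then 1 else 0

/-- The matrix `M₁(u, a)` of the transvection `T₁(u, a)` in the ordered basis
`(v₁, …, vₙ, e₁, e₋₁, e₂, e₋₂, …, eₘ, e₋ₘ)`; here `u` is the coordinate vector of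
`t₁v₁ + … + tₙvₙ + b₁e₁ + b₂e₂ + b₋₂e₋₂ + … + bₘeₘ + b₋ₘe₋ₘ`. -/
def M1 (P : PseudoInv R) {n : ℕ} (φ : Matrix (Fin n) (Fin n) R) (m : ℕ)
    (u : Fin (n + 2*m) → R) (a : R) : Matrix (Fin (n + 2*m)) (Fin (n + 2*m)) R :=
  fun i j =>
    if hj1 : (j : ℕ) = n + 1 then
      -- the `e₋₁` column
      if hi : (i : ℕ) < n then -u i
      else if hi1 : (i : ℕ) = n then
        -(P.sigma (u ⟨n, by omega⟩) * (P.i * P.i) + a * P.i + u ⟨n, by omega⟩)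
      else if hi2 : (i : ℕ) = n + 1 then 1
      else -u i
    else if hi1 : (i : ℕ) = n then
      -- the `e₁` row
      if hj : (j : ℕ) < n then
        -((P.i * P.i) * ∑ l : Fin n, P.sigma (u ⟨(l : ℕ), by omega⟩) * φ l ⟨(j : ℕ), hj⟩)
      else if hj2 : (j : ℕ) = n then 1
      else if hj3 : ((j : ℕ) - n) % 2 = 0 then
        P.i * P.sigma (u ⟨(j : ℕ) + 1, by omega⟩)
      else -(P.i * P.i) * P.sigma (u ⟨(j : ℕ) - 1, by omega⟩)
    else if (i : ℕ) = (j : ℕ) then 1 else 0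

/-- The matrix `M₋₁(u, a)` of the transvection `T₋₁(u, a)` in the ordered basis
`(v₁, …, vₙ, e₁, e₋₁, e₂, e₋₂, …, eₘ, e₋ₘ)`; here `u` is the coordinate vector of
`t₁v₁ + … + tₙvₙ + b₋₁e₋₁ + b₂e₂ + b₋₂e₋₂ + … + bₘeₘ + b₋ₘe₋ₘ`. -/
def Mneg1 (P : PseudoInv R) {n : ℕ} (φ : Matrix (Fin n) (Fin n) R) (m : ℕ)
    (u : Fin (n + 2*m) → R) (a : R) : Matrix (Fin (n + 2*m)) (Fin (n + 2*m)) R :=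
  fun i j =>
    if hj1 : (j : ℕ) = n then
      -- the `e₁` column
      if hi : (i : ℕ) < n then -u i
      else if hi1 : (i : ℕ) = n then 1
      else if hi2 : (i : ℕ) = n + 1 then
        -P.sigma (u ⟨n + 1, by omega⟩) + a - u ⟨n + 1, by omega⟩
      else -u i
    else if hi1 : (i : ℕ) = n + 1 then
      -- the `e₋₁` row
      if hj : (j : ℕ) < n then
        P.i * ∑ l : Fin n, P.sigma (u ⟨(l : ℕ), by omega⟩) * φ l ⟨(j : ℕ), hj⟩
      else if hj2 : (j : ℕ) = n + 1 then 1
      else if hj3 : ((j : ℕ) - n) % 2 = 0 then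
        -P.sigma (u ⟨(j : ℕ) + 1, by omega⟩)
      else P.i * P.sigma (u ⟨(j : ℕ) - 1, by omega⟩)
    else if (i : ℕ) = (j : ℕ) then 1 else 0

/-- The permutation matrix `P = [[0_{2m×n}, I_{2m}], [Iₙ, 0_{n×2m}]]`. -/
def Pperm (R : Type*) [CommRing R] (n m : ℕ) :
    Matrix (Fin (n + 2*m)) (Fin (n + 2*m)) R :=
  fun i j =>
    if (i : ℕ) < 2*m then (if (j : ℕ) = n + i then 1 else 0)
    else (if (j : ℕ) = (i : ℕ) - 2*m then 1 else 0)

/-- The coordinate vector of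
`u₁ = -a_{2m}v₁ - … - a_{n+2m-1}vₙ - a₂e₂ - a₃e₋₂ - … - a_{2m-2}eₘ - a_{2m-1}e₋ₘ`. -/
def u1vec {R : Type*} [CommRing R] {n m : ℕ} (hm : 2 ≤ m)
    (v : Fin (n + 2*m - 1) → R) : Fin (n + 2*m) → R :=
  fun l =>
    if hl : (l : ℕ) < n then -v ⟨2*m - 1 + (l : ℕ), by omega⟩
    else if hl1 : (l : ℕ) = n ∨ (l : ℕ) = n + 1 then 0
    else -v ⟨(l : ℕ) - n - 1, by omega⟩

/-- The coordinate vector of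
`u₂ = Σₖ 1̄⁻¹·(ā_{2m}·(φ⁻¹)_{k1} + … + ā_{n+2m-1}·(φ⁻¹)_{kn})·vₖ
      - (1̄⁻¹)²·ā₃e₂ + 1̄⁻¹·ā₂e₋₂ - … - (1̄⁻¹)²·ā_{2m-1}eₘ + 1̄⁻¹·ā_{2m-2}e₋ₘ`. -/
noncomputable def u2vec (P : PseudoInv R) {n : ℕ} (φ : Matrix (Fin n) (Fin n) R) {m : ℕ} (hm : 2 ≤ m)
    (v : Fin (n + 2*m - 1) → R) : Fin (n + 2*m) → R :=
  fun l =>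
    if hl : (l : ℕ) < n then
      P.i * ∑ j : Fin n, P.sigma (v ⟨2*m - 1 + (j : ℕ), by omega⟩) * φ⁻¹ ⟨(l : ℕ), hl⟩ j
    else if hl1 : (l : ℕ) = n ∨ (l : ℕ) = n + 1 then 0
    else if hl2 : ((l : ℕ) - n) % 2 = 0 then
      -(P.i * P.i) * P.sigma (v ⟨(l : ℕ) - n, by omega⟩)
    else P.i * P.sigma (v ⟨(l : ℕ) - n - 2, by omega⟩)


private lemma mul_list_sum_eq_zero {S : Type*} [NonUnitalNonAssocSemiring S] {ι : Type*}
    (A : S) (L : List ι) (F : ι → S) (h : ∀ t ∈ L, A * F t = 0) :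
    A * (L.map F).sum = 0 := by
  induction L with
  | nil => simp
  | cons b L ih =>
    simp only [List.map_cons, List.sum_cons, mul_add]
    rw [h b (List.mem_cons_self), ih (fun t ht => h t (List.mem_cons_of_mem _ ht)),
      add_zero]

private lemma rowProd {M : Type*} [DecidableEq M] [Fintype M] {S : Type*} [CommRing S]
    (i : M) (c : M → S) (hci : c i = 0) (L : List M) :
    (L.map fun j => (1 : Matrix M M S) + Matrix.single i j (c j)).prod
      = 1 + (L.map fun j => Matrix.single i j (c j)).sum := by
  induction L with
  | nil => simp
  | cons a L ih =>
    simp only [List.map_cons, List.prod_cons, List.sum_cons, ih]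
    have hA : Matrix.single i a (c a) *
        ((L.map fun j => Matrix.single i j (c j)).sum) = 0 := by
      refine mul_list_sum_eq_zero _ _ _ (fun t ht => ?_)
      by_cases hai : a = i
      · rw [hai, hci, Matrix.single_zero, zero_mul]
      · exact Matrix.single_mul_single_of_ne (h := hai) ..
    rw [add_mul, one_mul, mul_add, mul_one, hA, add_zero]
    abel

private lemma colProd {M : Type*} [DecidableEq M] [Fintype M] {S : Type*} [CommRing S]
    (j : M) (c : M → S) (hcj : c j = 0) (L : List M) :
    (L.map fun i => (1 : Matrix M M S) + Matrix.single i j (c i)).prod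
      = 1 + (L.map fun i => Matrix.single i j (c i)).sum := by
  induction L with
  | nil => simp
  | cons a L ih =>
    simp only [List.map_cons, List.prod_cons, List.sum_cons, ih]
    have hA : Matrix.single a j (c a) *
        ((L.map fun i => Matrix.single i j (c i)).sum) = 0 := by
      refine mul_list_sum_eq_zero _ _ _ (fun t ht => ?_)
      by_cases htj : t = j
      · rw [htj, hcj, Matrix.single_zero, mul_zero]
      · exact Matrix.single_mul_single_of_ne (h := Ne.symm htj) ..
    rw [add_mul, one_mul, mul_add, mul_one, hA, add_zero]
    abel

/-- `W = -1̄⁻¹ · v̄ · μ`, the nontrivial row of `α - 1`. -/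
private def Wfun (P : PseudoInv R) {n : ℕ} (φ : Matrix (Fin n) (Fin n) R) (m : ℕ)
    (v : Fin (n + 2*m - 1) → R) (b : Fin (n + 2*m - 1)) : R :=
  -P.i * ∑ k, P.sigma (v k) * muM P φ m k b

private def cOne (P : PseudoInv R) {n : ℕ} (φ : Matrix (Fin n) (Fin n) R) (m : ℕ)
    (v : Fin (n + 2*m - 1) → R) (j : Fin (n + 2*m)) : R :=
  if h : 2 ≤ (j : ℕ) then Wfun P φ m v ⟨(j : ℕ) - 1, by omega⟩ else 0

private def cTwo {n m : ℕ} (v : Fin (n + 2*m - 1) → R) (a : Fin (n + 2*m)) : R :=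
  if h : 1 ≤ (a : ℕ) then v ⟨(a : ℕ) - 1, by omega⟩ else 0

private lemma mu_col_zero (P : PseudoInv R) {n : ℕ} (φ : Matrix (Fin n) (Fin n) R) {m : ℕ}
    (hm : 1 ≤ m) (h0 : 0 < n + 2*m - 1) (k : Fin (n + 2*m - 1)) :
    muM P φ m k ⟨0, h0⟩ = 0 := by
  show psiEnt P φ (2*m) ((k : ℕ) + 1) ((0 : ℕ) + 1) = 0
  unfold psiEnt
  split_ifs <;> first | rfl | omega | simp_all

private lemma W_zero (P : PseudoInv R) {n : ℕ} (φ : Matrix (Fin n) (Fin n) R) {m : ℕ}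
    (v : Fin (n + 2*m - 1) → R) (hm : 1 ≤ m) (h0 : 0 < n + 2*m - 1) :
    Wfun P φ m v ⟨0, h0⟩ = 0 := by
  unfold Wfun
  rw [Finset.sum_eq_zero (fun k _ => by rw [mu_col_zero P φ hm h0 k, mul_zero]), mul_zero]

/-- for every `v ∈ R^{n+2m-1}`, the Vaserstein-type matrix `L(v)` lies in
`E_{n+2m}(R)`, i.e. `L(v)` is a product of elementary matrices. -/
theorem Lmat_mem_elementarySubgroup {R : Type*} [CommRing R] (P : PseudoInv R)
    {n m : ℕ} (hn : 1 ≤ n) (hm : 2 ≤ m)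
    (φ : Matrix (Fin n) (Fin n) R) (hφ : IsUnit φ.det)
    (v : Fin (n + 2*m - 1) → R) :
    ∃ l : List (Matrix (Fin (n + 2*m)) (Fin (n + 2*m)) R),
      (∀ A ∈ l, ∃ (i j : Fin (n + 2*m)) (r : R),
        i ≠ j ∧ A = 1 + Matrix.single i j r) ∧
      l.prod = Lmat P φ m v := by
  classical
  have hK : 4 < n + 2*m := by omega
  refine ⟨((List.finRange (n+2*m)).map fun a =>
      (1 : Matrix (Fin (n+2*m)) (Fin (n+2*m)) R)
        + Matrix.single a ⟨0, by omega⟩ (cTwo v a)) ++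
    ((List.finRange (n+2*m)).map fun j =>
      (1 : Matrix (Fin (n+2*m)) (Fin (n+2*m)) R)
        + Matrix.single ⟨1, by omega⟩ j (cOne P φ m v j)), ?_, ?_⟩
  · intro A hA
    rcases List.mem_append.1 hA with h | h
    · rcases List.mem_map.1 h with ⟨a, -, rfl⟩
      by_cases ha : (a : ℕ) = 0
      · refine ⟨⟨1, by omega⟩, ⟨0, by omega⟩, 0, by simp [Fin.ext_iff], ?_⟩
        have h1 : cTwo v a = 0 := by simp [cTwo, ha]
        rw [h1, Matrix.single_zero, Matrix.single_zero]
      · exact ⟨a, ⟨0, by omega⟩, cTwo v a, by simp [Fin.ext_iff, ha], rfl⟩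
    · rcases List.mem_map.1 h with ⟨j, -, rfl⟩
      by_cases hj : (j : ℕ) = 1
      · refine ⟨⟨1, by omega⟩, ⟨0, by omega⟩, 0, by simp [Fin.ext_iff], ?_⟩
        have h1 : cOne P φ m v j = 0 := by simp [cOne, hj]
        rw [h1, Matrix.single_zero, Matrix.single_zero]
      · exact ⟨⟨1, by omega⟩, j, cOne P φ m v j, by simp [Fin.ext_iff, Ne.symm hj], rfl⟩
  · rw [List.prod_append,
      colProd (⟨0, by omega⟩ : Fin (n+2*m)) (cTwo v) (by simp [cTwo]) _,
      rowProd (⟨1, by omega⟩ : Fin (n+2*m)) (cOne P φ m v) (by simp [cOne]) _,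
      ← Fin.sum_univ_def, ← Fin.sum_univ_def]
    have hzero : (∑ a : Fin (n+2*m), Matrix.single a ⟨0, by omega⟩ (cTwo v a)) *
        (∑ j : Fin (n+2*m), Matrix.single ⟨1, by omega⟩ j (cOne P φ m v j)) = 0 := by
      rw [Finset.sum_mul_sum]
      refine Finset.sum_eq_zero fun a _ => Finset.sum_eq_zero fun b _ => ?_
      exact Matrix.single_mul_single_of_ne (h := by simp [Fin.ext_iff]) ..
    rw [add_mul, one_mul, mul_add, mul_one, hzero, add_zero]
    ext i j
    have hS2 : (∑ a : Fin (n+2*m), Matrix.single a ⟨0, by omega⟩ (cTwo v a)) i j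
        = if (j : ℕ) = 0 then cTwo v i else 0 := by
      rw [Matrix.sum_apply, Finset.sum_eq_single i]
      · by_cases hj : (j : ℕ) = 0 <;>
          simp [Matrix.single, Fin.ext_iff, hj, eq_comm]
      · intro a _ ha
        simp [Matrix.single, ha]
      · simp
    have hS1 : (∑ b : Fin (n+2*m), Matrix.single ⟨1, by omega⟩ b (cOne P φ m v b)) i j
        = if (i : ℕ) = 1 then cOne P φ m v j else 0 := by
      rw [Matrix.sum_apply, Finset.sum_eq_single j]
      · by_cases hi : (i : ℕ) = 1 <;>
          simp [Matrix.single, Fin.ext_iff, hi, eq_comm]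
      · intro b _ hb
        simp [Matrix.single, hb]
      · simp
    rw [Matrix.add_apply, Matrix.add_apply, Matrix.one_apply, hS2, hS1]
    unfold Lmat
    by_cases hi0 : (i : ℕ) = 0
    · rw [dif_pos hi0]
      by_cases hj0 : (j : ℕ) = 0
      · simp [Fin.ext_iff, hi0, hj0, cTwo]
      · simp [Fin.ext_iff, hi0, hj0]
        omega
    · rw [dif_neg hi0]
      by_cases hj0 : (j : ℕ) = 0
      · rw [dif_pos hj0]
        have hij : ¬ i = j := by
          intro hh
          rw [Fin.ext_iff, hj0] at hh
          exact hi0 hh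
        rw [if_neg hij, if_pos hj0]
        have h1 : cTwo v i = v ⟨(i : ℕ) - 1, by omega⟩ := by
          rw [cTwo, dif_pos (by omega)]
        rw [h1]
        by_cases hi1 : (i : ℕ) = 1
        · simp [hi1, cOne, hj0]
        · simp [hi1]
      · rw [dif_neg hj0]
        unfold alphaM
        rw [Matrix.add_apply, Matrix.one_apply, Matrix.mul_apply]
        have hdelta : ((⟨(i:ℕ)-1, by omega⟩ : Fin (n+2*m-1)) = ⟨(j:ℕ)-1, by omega⟩)
            ↔ i = j := by
          simp [Fin.ext_iff]; omega
        by_cases hi1 : (i : ℕ) = 1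
        · have hrow : ∀ k, Matrix.vecMulVec (drow P n m) (fun k => P.sigma (v k))
              (⟨(i:ℕ)-1, by omega⟩ : Fin (n+2*m-1)) k = -P.i * P.sigma (v k) := by
            intro k
            rw [Matrix.vecMulVec_apply]
            simp [drow, hi1]
          rw [if_pos hi1]
          have hsum : (∑ k, Matrix.vecMulVec (drow P n m) (fun k => P.sigma (v k))
                (⟨(i:ℕ)-1, by omega⟩ : Fin (n+2*m-1)) k
                * muM P φ m k ⟨(j:ℕ)-1, by omega⟩)
              = Wfun P φ m v ⟨(j:ℕ)-1, by omega⟩ := by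
            unfold Wfun
            rw [Finset.mul_sum]
            exact Finset.sum_congr rfl fun k _ => by rw [hrow k]; ring
          rw [hsum, if_neg hj0]
          simp only [hdelta]
          by_cases hj1 : (j : ℕ) = 1
          · have hc : cOne P φ m v j = 0 := by simp [cOne, hj1]
            have hW0 : (⟨(j:ℕ)-1, by omega⟩ : Fin (n+2*m-1)) = ⟨0, by omega⟩ := by
              simp only [Fin.mk.injEq]; omega
            rw [hc, hW0, W_zero P φ v (by omega) (by omega)]
            ring
          · have hc : cOne P φ m v j = Wfun P φ m v ⟨(j:ℕ)-1, by omega⟩ := by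
              rw [cOne, dif_pos (by omega)]
            rw [hc]
            ring
        · have hrow0 : ∀ k, Matrix.vecMulVec (drow P n m) (fun k => P.sigma (v k))
              (⟨(i:ℕ)-1, by omega⟩ : Fin (n+2*m-1)) k = 0 := by
            intro k
            rw [Matrix.vecMulVec_apply]
            have : drow P n m (⟨(i:ℕ)-1, by omega⟩ : Fin (n+2*m-1)) = 0 := by
              simp [drow]; omega
            rw [this, zero_mul]
          rw [if_neg hi1, if_neg hj0,
            Finset.sum_eq_zero (fun k _ => by rw [hrow0 k, zero_mul])]
          simp only [hdelta]
          ring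

end OddUnitary
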